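/- Let N ≥ 1, 1 < p < ∞, and let Ω ⊂ ℝ^N be a bounded open set. Let g : ℝ^N → ℝ be measurable and Q-periodic with mean ḡ, and let M ≥ 0 satisfy |g(x) − ḡ| ≤ M for almost every x ∈ ℝ^N. Let c₁ > 0 be an L¹ Poincaré constant for Q, and let c_p > 0 satisfy the Poincaré inequality (∫_Ω |u|^p dx)^{1/p} ≤ c_p (∫_Ω |∇u|^p dx)^{1/p} for every u ∈ C¹_c(Ω). Then for every ε > 0 and every u ∈ C¹_c(Ω), |∫_Ω (g(x/ε) − ḡ) |u(x)|^p dx| ≤ p c₁ c_p^{p−1} M ε ∫_Ω |∇u|^p dx. -/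

import Mathlib

open MeasureTheory
open scoped Pointwise

/-- The unit cube `Q = [0,1]^N` in `ℝ^N`. -/
def unitCube (N : ℕ) : Set (EuclideanSpace ℝ (Fin N)) :=
  {x | ∀ i, x i ∈ Set.Icc (0 : ℝ) 1}

/-- The half-open unit cube `[0,1)^N`. -/
def cubeIco (N : ℕ) : Set (EuclideanSpace ℝ (Fin N)) :=
  {x | ∀ i, x i ∈ Set.Ico (0 : ℝ) 1}

lemma measurableSet_cubeIco (N : ℕ) : MeasurableSet (cubeIco N) := by
  have : cubeIco N = ⋂ i, (EuclideanSpace.proj (𝕜 := ℝ) i) ⁻¹' (Set.Ico (0:ℝ) 1) := by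
    ext x; simp only [cubeIco, Set.mem_iInter, Set.mem_setOf_eq, Set.mem_preimage]; rfl
  rw [this]
  exact MeasurableSet.iInter fun i =>
    ((EuclideanSpace.proj (𝕜 := ℝ) i).continuous.measurable) measurableSet_Ico

lemma measurableSet_unitCube (N : ℕ) : MeasurableSet (unitCube N) := by
  have : unitCube N = ⋂ i, (EuclideanSpace.proj (𝕜 := ℝ) i) ⁻¹' (Set.Icc (0:ℝ) 1) := by
    ext x; simp only [unitCube, Set.mem_iInter, Set.mem_setOf_eq, Set.mem_preimage]; rfl
  rw [this]
  exact MeasurableSet.iInter fun i =>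
    ((EuclideanSpace.proj (𝕜 := ℝ) i).continuous.measurable) measurableSet_Icc

lemma volume_cubeIco (N : ℕ) : volume (cubeIco N) = 1 := by
  have h := (EuclideanSpace.volume_preserving_symm_measurableEquiv_toLp (Fin N)).measure_preimage
    (s := Set.pi Set.univ fun _ : Fin N => Set.Ico (0:ℝ) 1)
    (MeasurableSet.univ_pi (fun _ => measurableSet_Ico)).nullMeasurableSet
  have heq : (MeasurableEquiv.toLp 2 (Fin N → ℝ)).symm ⁻¹'
      (Set.pi Set.univ fun _ : Fin N => Set.Ico (0:ℝ) 1) = cubeIco N := by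
    ext x
    simp only [Set.mem_preimage, Set.mem_pi, Set.mem_univ, forall_true_left, cubeIco,
      Set.mem_setOf_eq, forall_const]
    rfl
  rw [heq] at h
  rw [h, volume_pi_pi]
  simp

lemma volume_unitCube (N : ℕ) : volume (unitCube N) = 1 := by
  have h := (EuclideanSpace.volume_preserving_symm_measurableEquiv_toLp (Fin N)).measure_preimage
    (s := Set.pi Set.univ fun _ : Fin N => Set.Icc (0:ℝ) 1)
    (MeasurableSet.univ_pi (fun _ => measurableSet_Icc)).nullMeasurableSet
  have heq : (MeasurableEquiv.toLp 2 (Fin N → ℝ)).symm ⁻¹'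
      (Set.pi Set.univ fun _ : Fin N => Set.Icc (0:ℝ) 1) = unitCube N := by
    ext x
    simp only [Set.mem_preimage, Set.mem_pi, Set.mem_univ, forall_true_left, unitCube,
      Set.mem_setOf_eq, forall_const]
    rfl
  rw [heq] at h
  rw [h, volume_pi_pi]
  simp

lemma cubeIco_ae_eq (N : ℕ) : cubeIco N =ᵐ[volume] unitCube N := by
  refine ae_eq_of_subset_of_measure_ge ?_ ?_ (measurableSet_cubeIco N).nullMeasurableSet ?_
  · intro x hx i; exact Set.Ico_subset_Icc_self (hx i)
  · rw [volume_cubeIco, volume_unitCube]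
  · rw [volume_unitCube]; exact ENNReal.one_ne_top

lemma setIntegral_cubeIco (N : ℕ) (f : EuclideanSpace ℝ (Fin N) → ℝ) :
    ∫ x in cubeIco N, f x = ∫ x in unitCube N, f x :=
  setIntegral_congr_set (cubeIco_ae_eq N)


lemma image_scale_add_eq_preimage {ε : ℝ} (hε : 0 < ε) (c : EuclideanSpace ℝ (Fin N))
    (A : Set (EuclideanSpace ℝ (Fin N))) :
    (fun y => ε • (c + y)) '' A = (fun x => ε⁻¹ • x - c) ⁻¹' A := by
  ext x
  constructor
  · rintro ⟨y, hy, rfl⟩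
    simpa [inv_smul_smul₀ hε.ne'] using hy
  · intro hx
    exact ⟨ε⁻¹ • x - c, hx, by simp [smul_smul, mul_inv_cancel₀ hε.ne']⟩

lemma cov_scale_add {ε : ℝ} (hε : 0 < ε) (c : EuclideanSpace ℝ (Fin N))
    {A : Set (EuclideanSpace ℝ (Fin N))} (hA : MeasurableSet A)
    (h : EuclideanSpace ℝ (Fin N) → ℝ) :
    ∫ x in (fun y => ε • (c + y)) '' A, h x = ε ^ N * ∫ y in A, h (ε • (c + y)) := by
  have himg : MeasurableSet ((fun y => ε • (c + y)) '' A) := by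
    rw [image_scale_add_eq_preimage hε c A]
    exact (((measurable_const_smul ε⁻¹).sub measurable_const)) hA
  have hN : Module.finrank ℝ (EuclideanSpace ℝ (Fin N)) = N := finrank_euclideanSpace_fin
  set F : EuclideanSpace ℝ (Fin N) → ℝ := ((fun y => ε • (c + y)) '' A).indicator h with hF
  have step0 : ∫ x in (fun y => ε • (c + y)) '' A, h x = ∫ x, F x := by
    rw [hF, integral_indicator himg]
  have step1 : ∫ x, F (ε • x) = |(ε ^ N)⁻¹| • ∫ x, F x := by
    have := Measure.integral_comp_smul (volume : Measure (EuclideanSpace ℝ (Fin N))) F ε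
    rwa [hN] at this
  have step2 : ∫ x, F (ε • (c + x)) = ∫ x, F (ε • x) := by
    exact integral_add_left_eq_self (fun z => F (ε • z)) c
  have step3 : ∀ x, F (ε • (c + x)) = A.indicator (fun y => h (ε • (c + y))) x := by
    intro x
    by_cases hx : x ∈ A
    · rw [Set.indicator_of_mem hx, hF, Set.indicator_of_mem (Set.mem_image_of_mem _ hx)]
    · rw [Set.indicator_of_notMem hx, hF, Set.indicator_of_notMem]
      rw [image_scale_add_eq_preimage hε c A]
      simpa [inv_smul_smul₀ hε.ne'] using hx
  have hpos : (0:ℝ) < ε ^ N := pow_pos hε N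
  rw [step0]
  have : ∫ x, F x = ε ^ N * ∫ x, F (ε • x) := by
    rw [step1, smul_eq_mul, abs_of_pos (inv_pos.2 hpos), ← mul_assoc,
      mul_inv_cancel₀ hpos.ne', one_mul]
  rw [this, ← step2]
  congr 1
  rw [show (fun x => F (ε • (c + x))) = A.indicator (fun y => h (ε • (c + y))) from funext step3]
  · exact integral_indicator hA

section Cubes
variable {N : ℕ} {ε : ℝ}

/-- The lattice coordinate vector. -/
def kvec (N : ℕ) (k : Fin N → ℤ) : EuclideanSpace ℝ (Fin N) := WithLp.toLp 2 (fun i => (k i : ℝ))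

def latCube (N : ℕ) (ε : ℝ) (k : Fin N → ℤ) : Set (EuclideanSpace ℝ (Fin N)) :=
  (fun y => ε • (kvec N k + y)) '' cubeIco N

lemma mem_latCube (hε : 0 < ε) {k : Fin N → ℤ} {x : EuclideanSpace ℝ (Fin N)} :
    x ∈ latCube N ε k ↔ ∀ i, (k i : ℝ) ≤ ε⁻¹ * x i ∧ ε⁻¹ * x i < k i + 1 := by
  rw [latCube, image_scale_add_eq_preimage hε]
  constructor
  · intro hx i
    have := hx i
    simp only [PiLp.smul_apply, PiLp.sub_apply, smul_eq_mul, Set.mem_Ico] at this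
    have hk : (kvec N k) i = (k i : ℝ) := rfl
    rw [hk] at this
    constructor <;> linarith [this.1, this.2]
  · intro hx i
    have := hx i
    simp only [Set.mem_Ico, PiLp.smul_apply, PiLp.sub_apply, smul_eq_mul]
    have hk : (kvec N k) i = (k i : ℝ) := rfl
    rw [hk]
    constructor <;> linarith [this.1, this.2]

lemma latCube_cover (hε : 0 < ε) : (⋃ k : Fin N → ℤ, latCube N ε k) = Set.univ := by
  ext x
  simp only [Set.mem_iUnion, Set.mem_univ, iff_true]
  refine ⟨fun i => ⌊ε⁻¹ * x i⌋, (mem_latCube hε).2 fun i => ?_⟩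
  exact ⟨Int.floor_le _, Int.lt_floor_add_one _⟩

lemma latCube_disjoint (hε : 0 < ε) : Pairwise (Function.onFun Disjoint (latCube N ε)) := by
  intro k k' hkk'
  rw [Function.onFun, Set.disjoint_left]
  intro x hx hx'
  apply hkk'
  funext i
  have h1 := ((mem_latCube hε).1 hx) i
  have h2 := ((mem_latCube hε).1 hx') i
  have hk : k i = ⌊ε⁻¹ * x i⌋ := by
    symm; rw [Int.floor_eq_iff]; exact ⟨h1.1, h1.2⟩
  have hk' : k' i = ⌊ε⁻¹ * x i⌋ := by
    symm; rw [Int.floor_eq_iff]; exact ⟨h2.1, h2.2⟩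
  rw [hk, hk']

lemma measurableSet_latCube (hε : 0 < ε) (k : Fin N → ℤ) :
    MeasurableSet (latCube N ε k) := by
  rw [latCube, image_scale_add_eq_preimage hε]
  exact ((measurable_const_smul ε⁻¹).sub measurable_const) (measurableSet_cubeIco N)

end Cubes
lemma cube_estimate (N : ℕ) (g : EuclideanSpace ℝ (Fin N) → ℝ) (hgm : Measurable g)
    (gbar M c₁ : ℝ) (hM : 0 ≤ M)
    (hbd : ∀ᵐ x : EuclideanSpace ℝ (Fin N), |g x - gbar| ≤ M)
    (hgbar : gbar = ∫ y in unitCube N, g y)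
    (hpoinc : ∀ w : EuclideanSpace ℝ (Fin N) → ℝ, ContDiff ℝ 1 w →
      ∫ x in unitCube N, |w x - ∫ y in unitCube N, w y| ≤
        c₁ * ∫ x in unitCube N, ‖fderiv ℝ w x‖)
    (W : EuclideanSpace ℝ (Fin N) → ℝ) (hW : ContDiff ℝ 1 W)
    (CW : ℝ) (hWb : ∀ y, |W y| ≤ CW) :
    |∫ y in unitCube N, (g y - gbar) * W y| ≤
      M * (c₁ * ∫ y in unitCube N, ‖fderiv ℝ W y‖) := by
  have hvol : volume (unitCube N) < ⊤ := by rw [volume_unitCube]; exact ENNReal.one_lt_top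
  have hbdQ : ∀ᵐ y ∂(volume.restrict (unitCube N)), |g y - gbar| ≤ M := ae_restrict_of_ae hbd
  have hgint : IntegrableOn (fun y => g y - gbar) (unitCube N) := by
    refine Integrable.mono' (integrableOn_const (C := M) hvol.ne)
      ((hgm.sub measurable_const).aestronglyMeasurable) ?_
    filter_upwards [hbdQ] with y hy using by simpa using hy
  have hgint' : IntegrableOn g (unitCube N) := by
    have := hgint.add (integrableOn_const (C := gbar) hvol.ne)
    have heq : (fun y => g y - gbar) + (fun _ => gbar) = g := by funext y; simp
    rwa [IntegrableOn, ← heq]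
  have hWint : IntegrableOn W (unitCube N) := by
    refine Integrable.mono' (integrableOn_const (C := CW) hvol.ne)
      hW.continuous.aestronglyMeasurable ?_
    exact Filter.Eventually.of_forall fun y => by simpa using hWb y
  set Wbar := ∫ y in unitCube N, W y with hWbar
  have hdiffint : IntegrableOn (fun y => W y - Wbar) (unitCube N) :=
    hWint.sub (integrableOn_const (C := Wbar) hvol.ne)
  have hprodint : IntegrableOn (fun y => (g y - gbar) * (W y - Wbar)) (unitCube N) := by
    refine Integrable.mono' ((hdiffint.abs).const_mul M)
      ((hgm.sub measurable_const).aestronglyMeasurable.mul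
        (hW.continuous.aestronglyMeasurable.sub aestronglyMeasurable_const)) ?_
    filter_upwards [hbdQ] with y hy
    rw [Real.norm_eq_abs, abs_mul]
    exact mul_le_mul_of_nonneg_right hy (abs_nonneg _)
  have hzero : ∫ y in unitCube N, (g y - gbar) = 0 := by
    rw [integral_sub hgint' (integrableOn_const (C := gbar) hvol.ne),
      setIntegral_const, measureReal_def, volume_unitCube]
    simp [hgbar]
  have hsplit : ∫ y in unitCube N, (g y - gbar) * W y
      = ∫ y in unitCube N, (g y - gbar) * (W y - Wbar) := by
    have : ∀ y, (g y - gbar) * W y = (g y - gbar) * (W y - Wbar) + (g y - gbar) * Wbar := by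
      intro y; ring
    rw [integral_congr_ae (Filter.Eventually.of_forall this),
      integral_add hprodint (hgint.mul_const Wbar), integral_mul_const, hzero]
    ring
  rw [hsplit]
  calc |∫ y in unitCube N, (g y - gbar) * (W y - Wbar)|
      ≤ ∫ y in unitCube N, |g y - gbar| * |W y - Wbar| := by
        simpa [Real.norm_eq_abs] using
          norm_integral_le_integral_norm (fun y => (g y - gbar) * (W y - Wbar))
            (μ := volume.restrict (unitCube N))
    _ ≤ ∫ y in unitCube N, M * |W y - Wbar| := by
        have habs : IntegrableOn (fun y => |g y - gbar| * |W y - Wbar|) (unitCube N) := by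
          have := hprodint.abs
          simpa [abs_mul, IntegrableOn] using this
        refine integral_mono_ae habs ((hdiffint.abs).const_mul M) ?_
        filter_upwards [hbdQ] with y hy
        exact mul_le_mul_of_nonneg_right hy (abs_nonneg _)
    _ = M * ∫ y in unitCube N, |W y - Wbar| := integral_const_mul M _
    _ ≤ M * (c₁ * ∫ y in unitCube N, ‖fderiv ℝ W y‖) :=
        mul_le_mul_of_nonneg_left (hpoinc W hW) hM

lemma latCube_estimate {N : ℕ} {ε : ℝ} (hε : 0 < ε)
    (g : EuclideanSpace ℝ (Fin N) → ℝ) (hgm : Measurable g)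
    (hper : ∀ (x : EuclideanSpace ℝ (Fin N)) (z : Fin N → ℤ),
      g (x + (show EuclideanSpace ℝ (Fin N) from WithLp.toLp 2 (fun i => (z i : ℝ)))) = g x)
    (gbar M c₁ : ℝ) (hM : 0 ≤ M)
    (hbd : ∀ᵐ x : EuclideanSpace ℝ (Fin N), |g x - gbar| ≤ M)
    (hgbar : gbar = ∫ y in unitCube N, g y)
    (hpoinc : ∀ w : EuclideanSpace ℝ (Fin N) → ℝ, ContDiff ℝ 1 w →
      ∫ x in unitCube N, |w x - ∫ y in unitCube N, w y| ≤
        c₁ * ∫ x in unitCube N, ‖fderiv ℝ w x‖)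
    (v : EuclideanSpace ℝ (Fin N) → ℝ) (hv1 : ContDiff ℝ 1 v)
    (Cv : ℝ) (hCv : ∀ x, |v x| ≤ Cv) (k : Fin N → ℤ) :
    |∫ x in latCube N ε k, (g (ε⁻¹ • x) - gbar) * v x| ≤
      (M * c₁ * ε) * ∫ x in latCube N ε k, ‖fderiv ℝ v x‖ := by
  set c : EuclideanSpace ℝ (Fin N) := kvec N k with hc
  set W : EuclideanSpace ℝ (Fin N) → ℝ := fun y => v (ε • (c + y)) with hW
  have hWc : ContDiff ℝ 1 W := hv1.comp ((contDiff_const.add contDiff_id).const_smul ε)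
  have hWd : ∀ y, fderiv ℝ W y = ε • fderiv ℝ v (ε • (c + y)) := by
    intro y
    have hTd : HasFDerivAt (fun y : EuclideanSpace ℝ (Fin N) => ε • (c + y))
        (ε • ContinuousLinearMap.id ℝ (EuclideanSpace ℝ (Fin N))) y := by
      exact ((hasFDerivAt_id y).const_add c).const_smul ε
    have h1 : HasFDerivAt W ((fderiv ℝ v (ε • (c + y))).comp
        (ε • ContinuousLinearMap.id ℝ (EuclideanSpace ℝ (Fin N)))) y :=
      ((hv1.differentiable one_ne_zero _).hasFDerivAt).comp y hTd
    rw [h1.fderiv]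
    ext z
    simp
  have hWnorm : ∀ y, ‖fderiv ℝ W y‖ = ε * ‖fderiv ℝ v (ε • (c + y))‖ := by
    intro y; rw [hWd y, norm_smul, Real.norm_eq_abs, abs_of_pos hε]
  have hfW : ∀ y, (g (ε⁻¹ • (ε • (c + y))) - gbar) * v (ε • (c + y))
      = (g y - gbar) * W y := by
    intro y
    rw [inv_smul_smul₀ hε.ne']
    have hgy : g (c + y) = g y := by
      rw [add_comm]
      exact hper y k
    rw [hgy, hW]
  have step1 : ∫ x in latCube N ε k, (g (ε⁻¹ • x) - gbar) * v x
      = ε ^ N * ∫ y in unitCube N, (g y - gbar) * W y := by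
    rw [latCube, cov_scale_add hε c (measurableSet_cubeIco N), ← setIntegral_cubeIco]
    congr 1
    exact setIntegral_congr_fun (measurableSet_cubeIco N) (fun y _ => hfW y)
  have step2 := cube_estimate N g hgm gbar M c₁ hM hbd hgbar hpoinc W hWc Cv
    (fun y => hCv _)
  have step3 : ∫ y in unitCube N, ‖fderiv ℝ W y‖
      = ε * ∫ y in unitCube N, ‖fderiv ℝ v (ε • (c + y))‖ := by
    simp_rw [hWnorm]
    exact integral_const_mul ε _
  have step4 : ∫ x in latCube N ε k, ‖fderiv ℝ v x‖
      = ε ^ N * ∫ y in unitCube N, ‖fderiv ℝ v (ε • (c + y))‖ := by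
    rw [latCube, cov_scale_add hε c (measurableSet_cubeIco N), ← setIntegral_cubeIco]
  have hεN : (0:ℝ) < ε ^ N := pow_pos hε N
  calc |∫ x in latCube N ε k, (g (ε⁻¹ • x) - gbar) * v x|
      = ε ^ N * |∫ y in unitCube N, (g y - gbar) * W y| := by
        rw [step1, abs_mul, abs_of_pos hεN]
    _ ≤ ε ^ N * (M * (c₁ * ∫ y in unitCube N, ‖fderiv ℝ W y‖)) :=
        mul_le_mul_of_nonneg_left step2 hεN.le
    _ = (M * c₁ * ε) * (ε ^ N * ∫ y in unitCube N, ‖fderiv ℝ v (ε • (c + y))‖) := by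
        rw [step3]; ring
    _ = (M * c₁ * ε) * ∫ x in latCube N ε k, ‖fderiv ℝ v x‖ := by rw [step4]

/-- Remark 3.2 of the paper: gradient-only form of the periodic averaging
estimate. With `c₁` an `L¹` Poincaré constant for `Q` and `c_p` a Poincaré constant for
`C¹_c(Ω)`, for every `ε > 0` and `u ∈ C¹_c(Ω)`:
`|∫_Ω (g(x/ε) − ḡ)|u|^p dx| ≤ p c₁ c_p^{p−1} M ε ∫_Ω |∇u|^p dx`. -/
theorem averaging_estimate_gradient_form
    (N : ℕ) (hN : 1 ≤ N) (p : ℝ) (hp : 1 < p)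
    (Ω : Set (EuclideanSpace ℝ (Fin N))) (hΩo : IsOpen Ω)
    (hΩb : Bornology.IsBounded Ω)
    (g : EuclideanSpace ℝ (Fin N) → ℝ) (hgm : Measurable g)
    (hper : ∀ (x : EuclideanSpace ℝ (Fin N)) (z : Fin N → ℤ),
      g (x + (show EuclideanSpace ℝ (Fin N) from WithLp.toLp 2 (fun i => (z i : ℝ)))) = g x)
    (gbar : ℝ) (hgbar : gbar = ∫ y in unitCube N, g y)
    (M : ℝ) (hM : 0 ≤ M)
    (hbd : ∀ᵐ x : EuclideanSpace ℝ (Fin N), |g x - gbar| ≤ M)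
    (c₁ : ℝ) (hc₁ : 0 < c₁)
    (hpoinc : ∀ w : EuclideanSpace ℝ (Fin N) → ℝ, ContDiff ℝ 1 w →
      ∫ x in unitCube N, |w x - ∫ y in unitCube N, w y| ≤
        c₁ * ∫ x in unitCube N, ‖fderiv ℝ w x‖)
    (cp : ℝ) (hcp : 0 < cp)
    (hpoincΩ : ∀ u : EuclideanSpace ℝ (Fin N) → ℝ,
      ContDiff ℝ 1 u → HasCompactSupport u → tsupport u ⊆ Ω →
      (∫ x in Ω, |u x| ^ p) ^ (1 / p) ≤ cp * (∫ x in Ω, ‖fderiv ℝ u x‖ ^ p) ^ (1 / p)) :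
    ∀ ε > (0 : ℝ), ∀ u : EuclideanSpace ℝ (Fin N) → ℝ,
      ContDiff ℝ 1 u → HasCompactSupport u → tsupport u ⊆ Ω →
      |∫ x in Ω, (g (ε⁻¹ • x) - gbar) * |u x| ^ p| ≤
        p * c₁ * cp ^ (p - 1) * M * ε * ∫ x in Ω, ‖fderiv ℝ u x‖ ^ p := by
  intro ε hε u hu1 hu2 hu3
  have hp0 : (0:ℝ) < p := lt_trans one_pos hp
  have hp1 : (0:ℝ) < p - 1 := by linarith
  have hudiff : Differentiable ℝ u := hu1.differentiable one_ne_zero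
  have hucont : Continuous u := hu1.continuous
  -- the function v = |u|^p
  set v : EuclideanSpace ℝ (Fin N) → ℝ := fun x => ‖u x‖ ^ p with hv
  have hv1 : ContDiff ℝ 1 v := hu1.norm_rpow hp
  have hv2 : HasCompactSupport v := by
    have := hu2.comp_left (g := fun t : ℝ => ‖t‖ ^ p) (by simp [Real.zero_rpow hp0.ne'])
    exact this
  have hvnn : ∀ x, 0 ≤ v x := fun x => Real.rpow_nonneg (norm_nonneg _) p
  have hvcont : Continuous v := hv1.continuous
  obtain ⟨Cv, hCv⟩ := hvcont.bounded_above_of_compact_support hv2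
  have hdvle : ∀ x, ‖fderiv ℝ v x‖ ≤ p * (‖u x‖ ^ (p-1) * ‖fderiv ℝ u x‖) := fun x => by
    simpa [mul_assoc, hv] using norm_fderiv_norm_rpow_le hudiff hp
  -- support facts
  have htsv : tsupport v ⊆ Ω := by
    refine subset_trans (closure_mono ?_) hu3
    intro x hx
    simp only [Function.mem_support, hv] at hx ⊢
    intro hxx
    rw [hxx] at hx
    simp [Real.zero_rpow hp0.ne'] at hx
  have hvz : ∀ x ∉ Ω, v x = 0 := fun x hx =>
    image_eq_zero_of_notMem_tsupport (fun h => hx (htsv h))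
  have huz : ∀ x ∉ Ω, u x = 0 := fun x hx =>
    image_eq_zero_of_notMem_tsupport (fun h => hx (hu3 h))
  have hduz : ∀ x ∉ Ω, fderiv ℝ u x = 0 := by
    intro x hx
    have hopen : IsOpen (tsupport u)ᶜ := (isClosed_tsupport u).isOpen_compl
    have hmem : x ∈ (tsupport u)ᶜ := fun h => hx (hu3 h)
    have hev : u =ᶠ[nhds x] (fun _ => 0) := by
      filter_upwards [hopen.mem_nhds hmem] with y hy
      exact image_eq_zero_of_notMem_tsupport hy
    rw [hev.fderiv_eq]
    exact fderiv_const_apply _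
  -- the integrand
  set f : EuclideanSpace ℝ (Fin N) → ℝ := fun x => (g (ε⁻¹ • x) - gbar) * v x with hf
  have goal_eq : (fun x => (g (ε⁻¹ • x) - gbar) * |u x| ^ p) = f := by
    funext x; rw [hf, hv]; simp [Real.norm_eq_abs]
  rw [goal_eq, setIntegral_eq_integral_of_forall_compl_eq_zero
    (fun x hx => by simp [hvz x hx])]
  -- a.e. bound after scaling
  have hbd' : ∀ᵐ x : EuclideanSpace ℝ (Fin N), |g (ε⁻¹ • x) - gbar| ≤ M := by
    rw [ae_iff] at hbd ⊢
    have hsub : {x : EuclideanSpace ℝ (Fin N) | ¬ |g (ε⁻¹ • x) - gbar| ≤ M}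
        = ε • {x : EuclideanSpace ℝ (Fin N) | ¬ |g x - gbar| ≤ M} := by
      ext x; rw [Set.mem_smul_set_iff_inv_smul_mem₀ hε.ne']; rfl
    rw [hsub, Measure.addHaar_smul, hbd, mul_zero]
  -- integrability
  have hfm : AEStronglyMeasurable f volume :=
    (((hgm.comp (measurable_const_smul ε⁻¹)).sub measurable_const).mul
      hvcont.measurable).aestronglyMeasurable
  have hvint : Integrable v := hvcont.integrable_of_hasCompactSupport hv2
  have hfint : Integrable f := by
    refine Integrable.mono' (hvint.const_mul M) hfm ?_
    filter_upwards [hbd'] with x hx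
    rw [hf, Real.norm_eq_abs, abs_mul, abs_of_nonneg (hvnn x)]
    exact mul_le_mul_of_nonneg_right hx (hvnn x)
  have hDvcont : Continuous (fun x => fderiv ℝ v x) := hv1.continuous_fderiv one_ne_zero
  have hDvint : Integrable (fun x => ‖fderiv ℝ v x‖) :=
    (hDvcont.integrable_of_hasCompactSupport (hv2.fderiv ℝ)).norm
  -- per-cube estimate
  have key : ∀ k : Fin N → ℤ, |∫ x in latCube N ε k, f x| ≤
      (M * c₁ * ε) * ∫ x in latCube N ε k, ‖fderiv ℝ v x‖ := fun k =>
    latCube_estimate hε g hgm hper gbar M c₁ hM hbd hgbar hpoinc v hv1 Cv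
      (fun x => by rw [← Real.norm_eq_abs]; exact hCv x) k
  -- summation over the cubes
  have hsum_f : HasSum (fun k : Fin N → ℤ => ∫ x in latCube N ε k, f x) (∫ x, f x) := by
    have := hasSum_integral_iUnion (μ := volume) (measurableSet_latCube hε)
      (latCube_disjoint hε) (by rw [latCube_cover hε]; exact hfint.integrableOn)
    rwa [latCube_cover hε, Measure.restrict_univ] at this
  have hsum_dv : HasSum (fun k : Fin N → ℤ => ∫ x in latCube N ε k, ‖fderiv ℝ v x‖)
      (∫ x, ‖fderiv ℝ v x‖) := by
    have := hasSum_integral_iUnion (μ := volume) (measurableSet_latCube hε)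
      (latCube_disjoint hε) (by rw [latCube_cover hε]; exact hDvint.integrableOn)
    rwa [latCube_cover hε, Measure.restrict_univ] at this
  have hMc₁ε : (0:ℝ) ≤ M * c₁ * ε := by positivity
  have hsum_bound : |∫ x, f x| ≤ (M * c₁ * ε) * ∫ x, ‖fderiv ℝ v x‖ := by
    have hsummable_b : Summable (fun k : Fin N → ℤ =>
        (M * c₁ * ε) * ∫ x in latCube N ε k, ‖fderiv ℝ v x‖) :=
      hsum_dv.summable.mul_left _
    have hsummable_abs : Summable (fun k : Fin N → ℤ => |∫ x in latCube N ε k, f x|) :=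
      Summable.of_nonneg_of_le (fun k => abs_nonneg _) (fun k => key k) hsummable_b
    calc |∫ x, f x| = |∑' k : Fin N → ℤ, ∫ x in latCube N ε k, f x| := by
          rw [hsum_f.tsum_eq]
      _ ≤ ∑' k : Fin N → ℤ, |∫ x in latCube N ε k, f x| := by
          simpa [Real.norm_eq_abs] using norm_tsum_le_tsum_norm
            (f := fun k : Fin N → ℤ => ∫ x in latCube N ε k, f x)
            (by simpa [Real.norm_eq_abs] using hsummable_abs)
      _ ≤ ∑' k : Fin N → ℤ, (M * c₁ * ε) * ∫ x in latCube N ε k, ‖fderiv ℝ v x‖ :=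
          Summable.tsum_le_tsum (fun k => key k) hsummable_abs hsummable_b
      _ = (M * c₁ * ε) * ∑' k : Fin N → ℤ, ∫ x in latCube N ε k, ‖fderiv ℝ v x‖ :=
          tsum_mul_left
      _ = (M * c₁ * ε) * ∫ x, ‖fderiv ℝ v x‖ := by rw [hsum_dv.tsum_eq]
  -- Hölder step
  set ψ : EuclideanSpace ℝ (Fin N) → ℝ := fun x => ‖u x‖ ^ (p-1) * ‖fderiv ℝ u x‖ with hψ
  have h1cont : Continuous (fun x : EuclideanSpace ℝ (Fin N) => ‖u x‖ ^ (p-1)) := by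
    refine continuous_iff_continuousAt.2 fun x => ?_
    exact (Real.continuousAt_rpow_const _ _ (Or.inr hp1.le)).comp hucont.norm.continuousAt
  have hsupp1 : HasCompactSupport (fun x : EuclideanSpace ℝ (Fin N) => ‖u x‖ ^ (p-1)) := by
    have := hu2.comp_left (g := fun t : ℝ => ‖t‖ ^ (p-1))
      (by simp [Real.zero_rpow hp1.ne'])
    exact this
  have hDucont : Continuous (fun x => ‖fderiv ℝ u x‖) := (hu1.continuous_fderiv one_ne_zero).norm
  have hDusupp : HasCompactSupport (fun x => ‖fderiv ℝ u x‖) := (hu2.fderiv ℝ).norm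
  have hψcont : Continuous ψ := h1cont.mul hDucont
  have hψsupp : HasCompactSupport ψ := by
    have := hsupp1.mul_right
      (f' := fun x => ‖fderiv ℝ u x‖)
    simpa [hψ, Pi.mul_def] using this
  have hψint : Integrable ψ := hψcont.integrable_of_hasCompactSupport hψsupp
  have hq : (p/(p-1)).HolderConjugate p := (Real.HolderConjugate.conjExponent hp).symm
  have hold := integral_mul_le_Lp_mul_Lq_of_nonneg hq (μ := volume)
    (f := fun x => ‖u x‖ ^ (p-1)) (g := fun x => ‖fderiv ℝ u x‖)
    (Filter.Eventually.of_forall fun x => Real.rpow_nonneg (norm_nonneg _) _)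
    (Filter.Eventually.of_forall fun x => norm_nonneg _)
    (h1cont.memLp_of_hasCompactSupport hsupp1)
    (hDucont.memLp_of_hasCompactSupport hDusupp)
  -- rewrite the Hölder exponents
  have hexp : ∀ x : EuclideanSpace ℝ (Fin N), (‖u x‖ ^ (p-1)) ^ (p/(p-1)) = ‖u x‖ ^ p := by
    intro x
    rw [← Real.rpow_mul (norm_nonneg _)]
    congr 1
    field_simp
  have hXeq : ∫ x, ‖u x‖ ^ p = ∫ x in Ω, |u x| ^ p := by
    have heq : (fun x : EuclideanSpace ℝ (Fin N) => ‖u x‖ ^ p)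
        = fun x => |u x| ^ p := by funext x; rw [Real.norm_eq_abs]
    rw [heq]
    exact (setIntegral_eq_integral_of_forall_compl_eq_zero fun x hx => by
      rw [huz x hx]; simp [Real.zero_rpow hp0.ne']).symm
  have hYeq : ∫ x, ‖fderiv ℝ u x‖ ^ p = ∫ x in Ω, ‖fderiv ℝ u x‖ ^ p :=
    (setIntegral_eq_integral_of_forall_compl_eq_zero fun x hx => by
      rw [hduz x hx]; simp [Real.zero_rpow hp0.ne']).symm
  set X : ℝ := ∫ x in Ω, |u x| ^ p with hX
  set Y : ℝ := ∫ x in Ω, ‖fderiv ℝ u x‖ ^ p with hY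
  have hXnn : 0 ≤ X := setIntegral_nonneg hΩo.measurableSet fun x _ => by positivity
  have hYnn : 0 ≤ Y := setIntegral_nonneg hΩo.measurableSet fun x _ => by positivity
  have hpoi : X ^ (1/p) ≤ cp * Y ^ (1/p) := hpoincΩ u hu1 hu2 hu3
  have hXq : X ^ ((p-1)/p) ≤ cp ^ (p-1) * Y ^ ((p-1)/p) := by
    have h1 : X ^ ((p-1)/p) = (X ^ (1/p)) ^ (p-1) := by
      rw [← Real.rpow_mul hXnn]; congr 1; field_simp
    have h2 : (X ^ (1/p)) ^ (p-1) ≤ (cp * Y ^ (1/p)) ^ (p-1) :=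
      Real.rpow_le_rpow (Real.rpow_nonneg hXnn _) hpoi hp1.le
    have h3 : (cp * Y ^ (1/p)) ^ (p-1) = cp ^ (p-1) * (Y ^ (1/p)) ^ (p-1) :=
      Real.mul_rpow hcp.le (Real.rpow_nonneg hYnn _)
    have h4 : (Y ^ (1/p)) ^ (p-1) = Y ^ ((p-1)/p) := by
      rw [← Real.rpow_mul hYnn]; congr 1; field_simp
    rw [h1]
    calc (X ^ (1/p)) ^ (p-1) ≤ (cp * Y ^ (1/p)) ^ (p-1) := h2
      _ = cp ^ (p-1) * Y ^ ((p-1)/p) := by rw [h3, h4]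
  have hA : ∫ x, ψ x ≤ cp ^ (p-1) * Y := by
    have h5 : (∫ x, (‖u x‖ ^ (p-1)) ^ (p/(p-1))) = X := by
      rw [show (fun x : EuclideanSpace ℝ (Fin N) => (‖u x‖ ^ (p-1)) ^ (p/(p-1)))
        = fun x => ‖u x‖ ^ p from funext hexp]
      exact hXeq
    have h6 : 1/(p/(p-1)) = (p-1)/p := by field_simp
    calc ∫ x, ψ x ≤ (∫ x, (‖u x‖ ^ (p-1)) ^ (p/(p-1))) ^ (1/(p/(p-1)))
          * (∫ x, ‖fderiv ℝ u x‖ ^ p) ^ (1/p) := hold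
      _ = X ^ ((p-1)/p) * Y ^ (1/p) := by rw [h5, h6, hYeq]
      _ ≤ (cp ^ (p-1) * Y ^ ((p-1)/p)) * Y ^ (1/p) :=
          mul_le_mul_of_nonneg_right hXq (Real.rpow_nonneg hYnn _)
      _ = cp ^ (p-1) * (Y ^ ((p-1)/p) * Y ^ (1/p)) := by ring
      _ = cp ^ (p-1) * Y := by
          have hone : (p-1)/p + 1/p = 1 := by
            rw [← add_div, sub_add_cancel, div_self hp0.ne']
          rw [← Real.rpow_add' hYnn (by rw [hone]; norm_num), hone, Real.rpow_one]
  have hdvtot : ∫ x, ‖fderiv ℝ v x‖ ≤ p * ∫ x, ψ x := by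
    calc ∫ x, ‖fderiv ℝ v x‖ ≤ ∫ x, p * ψ x :=
        integral_mono hDvint (hψint.const_mul p) (fun x => hdvle x)
      _ = p * ∫ x, ψ x := integral_const_mul p _
  have hψnn : 0 ≤ ∫ x, ψ x := integral_nonneg fun x => by positivity
  calc |∫ x, f x| ≤ (M * c₁ * ε) * ∫ x, ‖fderiv ℝ v x‖ := hsum_bound
    _ ≤ (M * c₁ * ε) * (p * ∫ x, ψ x) := mul_le_mul_of_nonneg_left hdvtot hMc₁ε
    _ ≤ (M * c₁ * ε) * (p * (cp ^ (p-1) * Y)) := by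
        refine mul_le_mul_of_nonneg_left (mul_le_mul_of_nonneg_left hA hp0.le) hMc₁ε
    _ = p * c₁ * cp ^ (p-1) * M * ε * Y := by ring
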